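/- For all real x with 0 < x < 1, (log x)² ≥ (x² − 1)/2 − log x. -/

import Mathlib

theorem stmt7 (x : ℝ) (hx0 : 0 < x) (hx1 : x < 1) :
    (x ^ 2 - 1) / 2 - Real.log x ≤ (Real.log x) ^ 2 := by
  set f : ℝ → ℝ := fun y => (Real.log y) ^ 2 + Real.log y - (y ^ 2 - 1) / 2 with hf
  have hderiv : ∀ y ∈ Set.Ioo x 1, HasDerivAt f
      (2 * Real.log y * (1 / y) + 1 / y - y) y := by
    intro y hy
    have hy0 : 0 < y := lt_trans hx0 hy.1
    have hlog : HasDerivAt Real.log (1 / y) y := by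
      simpa using Real.hasDerivAt_log hy0.ne'
    have h1 : HasDerivAt (fun y => (Real.log y) ^ 2)
        (2 * Real.log y ^ 1 * (1 / y)) y := by
      simpa using (hlog.fun_pow 2)
    have h2 : HasDerivAt (fun y : ℝ => (y ^ 2 - 1) / 2) (2 * y ^ 1 / 2) y := by
      simpa using (((hasDerivAt_pow 2 y).sub_const 1).div_const 2)
    have := (h1.fun_add hlog).fun_sub h2
    simpa [pow_one] using this.congr_deriv (by ring)
  have hanti : AntitoneOn f (Set.Icc x 1) := by
    apply antitoneOn_of_deriv_nonpos (convex_Icc x 1)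
    · apply ContinuousOn.sub
      · apply ContinuousOn.add
        · exact (Real.continuousOn_log.mono (by
            intro y hy
            exact ne_of_gt (lt_of_lt_of_le hx0 hy.1))).pow 2
        · exact Real.continuousOn_log.mono (by
            intro y hy
            exact ne_of_gt (lt_of_lt_of_le hx0 hy.1))
      · fun_prop
    · intro y hy
      rw [interior_Icc] at hy
      exact ((hderiv y hy).differentiableAt.differentiableWithinAt)
    · intro y hy
      rw [interior_Icc] at hy
      have hy0 : 0 < y := lt_trans hx0 hy.1
      rw [(hderiv y hy).deriv]
      have hlog2 : 2 * Real.log y ≤ y ^ 2 - 1 := by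
        have := Real.log_le_sub_one_of_pos (x := y ^ 2) (by positivity)
        rwa [Real.log_pow, Nat.cast_ofNat] at this
      have : 2 * Real.log y * (1 / y) + 1 / y - y = (2 * Real.log y + 1 - y ^ 2) / y := by
        field_simp
      rw [this]
      apply div_nonpos_of_nonpos_of_nonneg _ hy0.le
      linarith
  have key : f 1 ≤ f x := hanti (Set.left_mem_Icc.2 hx1.le)
    (Set.right_mem_Icc.2 hx1.le) hx1.le
  simp only [hf, Real.log_one] at key
  norm_num at key
  linarith
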